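/- Let f be a submodular function on subsets of a finite set U, let A_1,...,A_m be pairwise disjoint subsets of U, and let B ⊆ U. Then there exists i ∈ {1,...,m} such that f(A_i ∪ B) ≥ (1 - 1/m) f(B), assuming f is nonnegative. -/

import Mathlib

lemma aux_set_submod {U : Type*} [DecidableEq U] (f : Finset U → ℝ)
    (hsub : ∀ A B : Finset U, A ⊆ B → ∀ x ∉ B,
      f (insert x B) - f B ≤ f (insert x A) - f A) :
    ∀ (T S B' : Finset U), B' ⊆ S → Disjoint T S →
      f (S ∪ T) - f S ≤ f (B' ∪ T) - f B' := by
  intro T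
  induction T using Finset.induction_on with
  | empty => intro S B' _ _; simp
  | @insert x T' hx ih =>
    intro S B' hBS hdisj
    have hdT' : Disjoint T' S := (Finset.disjoint_insert_left.mp hdisj).2
    have hxS : x ∉ S := (Finset.disjoint_insert_left.mp hdisj).1
    have hxST : x ∉ S ∪ T' := by simp [hxS, hx]
    have h1 : f (insert x (S ∪ T')) - f (S ∪ T') ≤
        f (insert x (B' ∪ T')) - f (B' ∪ T') :=
      hsub (B' ∪ T') (S ∪ T') (Finset.union_subset_union hBS le_rfl) x hxST
    have h2 := ih S B' hBS hdT'
    have e1 : S ∪ insert x T' = insert x (S ∪ T') := by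
      ext y; simp [or_left_comm]
    have e2 : B' ∪ insert x T' = insert x (B' ∪ T') := by
      ext y; simp [or_left_comm]
    rw [e1, e2]
    linarith

theorem stmt_0 {U : Type*} [DecidableEq U] (f : Finset U → ℝ)
    (hsub : ∀ A B : Finset U, A ⊆ B → ∀ x ∉ B,
      f (insert x B) - f B ≤ f (insert x A) - f A)
    (hnn : ∀ X : Finset U, 0 ≤ f X)
    (m : ℕ) (hm : 1 ≤ m) (A : Fin m → Finset U)
    (hdisj : ∀ i j : Fin m, i ≠ j → Disjoint (A i) (A j))
    (B : Finset U) :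
    ∃ i : Fin m, (1 - 1 / (m : ℝ)) * f B ≤ f (A i ∪ B) := by
  classical
  set A' : ℕ → Finset U := fun i => if h : i < m then A ⟨i, h⟩ \ B else ∅ with hA'
  -- telescoping bound
  have key : ∀ k : ℕ,
      f (B ∪ (Finset.range k).biUnion A') - f B ≤
        ∑ i ∈ Finset.range k, (f (A' i ∪ B) - f B) := by
    intro k
    induction k with
    | zero => simp
    | succ k ih =>
      have hdk : Disjoint (A' k) (B ∪ (Finset.range k).biUnion A') := by
        rw [Finset.disjoint_union_right]
        constructor
        · by_cases h : k < m
          · simp only [hA', dif_pos h]; exact Finset.sdiff_disjoint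
          · simp [hA', dif_neg h]
        · rw [Finset.disjoint_biUnion_right]
          intro j hj
          rw [Finset.mem_range] at hj
          by_cases h : k < m
          · have hjm : j < m := lt_trans hj h
            simp only [hA', dif_pos h, dif_pos hjm]
            have hne : (⟨k, h⟩ : Fin m) ≠ ⟨j, hjm⟩ := by
              simp [Fin.ext_iff]; omega
            exact (hdisj _ _ hne).mono Finset.sdiff_subset Finset.sdiff_subset
          · simp [hA', dif_neg h]
      have hstep := aux_set_submod f hsub (A' k) (B ∪ (Finset.range k).biUnion A') B
        Finset.subset_union_left hdk
      have e : B ∪ (Finset.range (k+1)).biUnion A' =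
          (B ∪ (Finset.range k).biUnion A') ∪ A' k := by
        rw [Finset.range_add_one, Finset.biUnion_insert,
          Finset.union_comm (A' k), ← Finset.union_assoc]
      rw [e, Finset.sum_range_succ]
      have : f (B ∪ A' k) = f (A' k ∪ B) := by rw [Finset.union_comm]
      linarith [hstep, ih, this]
  have hsum : -f B ≤ ∑ i ∈ Finset.range m, (f (A' i ∪ B) - f B) := by
    have := key m
    have h0 := hnn (B ∪ (Finset.range m).biUnion A')
    linarith
  -- extract an index
  by_contra hcon
  push_neg at hcon
  have hmpos : (0:ℝ) < m := by exact_mod_cast hm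
  have hlt : ∑ i ∈ Finset.range m, (f (A' i ∪ B) - f B) <
      ∑ i ∈ Finset.range m, (-(1/(m:ℝ)) * f B) := by
    apply Finset.sum_lt_sum_of_nonempty
    · rw [Finset.nonempty_range_iff]; omega
    · intro i hi
      rw [Finset.mem_range] at hi
      have hAi : A' i ∪ B = A ⟨i, hi⟩ ∪ B := by
        simp only [hA', dif_pos hi]
        exact Finset.sdiff_union_self_eq_union
      rw [hAi]
      have := hcon ⟨i, hi⟩
      nlinarith [this]
  rw [Finset.sum_const, Finset.card_range, nsmul_eq_mul] at hlt
  have : (m:ℝ) * (-(1/(m:ℝ)) * f B) = -f B := by field_simp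
  linarith
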